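/- Let H = Z(a,c) be an M×M zig-zag matrix. Then: (i) for every even n with 1 ≤ n ≤ M, the standard basis vector e_n satisfies H e_n = a_n e_n; (ii) for every odd n with 1 ≤ n ≤ M−1, assuming c_n ≠ 0 and (when n ≥ 3) a_{n-1} ≠ a_n, the vector ψ ∈ ℝ^M defined by ψ_{n-1} = −(a_n − a_{n+1}) c_{n-1} / ((a_{n-1} − a_n) c_n) (this entry present only when n ≥ 3), ψ_n = (a_n − a_{n+1})/c_n, ψ_{n+1} = 1, and ψ_j = 0 for all other j, satisfies H ψ = a_n ψ. -/
import Mathlib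


/-- The `M × M` zig-zag matrix `Z(a,c)` built from the (1-based) diagonal
parameters `a₁, …, a_M` and off-diagonal parameters `c₁, …, c_{M-1}`:
`Z[i,i] = aᵢ` for all `i`; for every even (1-based) row index `i`,
`Z[i,i-1] = c_{i-1}` and (when `i+1 ≤ M`) `Z[i,i+1] = cᵢ`; all other
entries vanish.  (Rows/columns `i : Fin M` carry the 1-based label `i.val + 1`.) -/
def zigzag (M : ℕ) (a c : ℕ → ℝ) : Matrix (Fin M) (Fin M) ℝ :=
  Matrix.of fun i j =>
    if i.val = j.val then a (i.val + 1)
    else if (i.val + 1) % 2 = 0 ∧ j.val + 1 = i.val then c (j.val + 1)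
    else if (i.val + 1) % 2 = 0 ∧ j.val = i.val + 1 then c (i.val + 1)
    else 0

/-- extension of a `Fin M`-vector to `ℕ` by zero -/
def extv (M : ℕ) (v : Fin M → ℝ) : ℕ → ℝ := fun k => if h : k < M then v ⟨k, h⟩ else 0

lemma zigzag_mulVec (M : ℕ) (a c : ℕ → ℝ) (v : Fin M → ℝ) (i : Fin M) :
    (zigzag M a c).mulVec v i =
      a (i.val + 1) * v i +
      (if (i.val + 1) % 2 = 0 then
        c i.val * extv M v (i.val - 1) + c (i.val + 1) * extv M v (i.val + 1) else 0) := by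
  classical
  set g : ℕ → ℝ := fun k =>
      (if k = i.val then a (i.val + 1) * extv M v k else 0)
        + (if k = i.val - 1 then (if (i.val + 1) % 2 = 0 ∧ 1 ≤ i.val then c i.val * extv M v k else 0) else 0)
        + (if k = i.val + 1 then (if (i.val + 1) % 2 = 0 then c (i.val + 1) * extv M v k else 0) else 0)
    with hg
  have hsub : i.val - 1 < M := Nat.lt_of_le_of_lt (Nat.sub_le _ _) i.isLt
  have key : ∀ j : Fin M,
      (zigzag M a c) i j * v j
      = g j.val := by
    intro j
    have hj : extv M v j.val = v j := by simp [extv, j.isLt]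
    simp only [hg, hj, zigzag, Matrix.of_apply]
    have hc : ∀ h : j.val + 1 = i.val, c (j.val + 1) = c i.val := fun h => by rw [h]
    split_ifs with h1 h2 h3 h4 h5 <;>
      first
        | omega
        | (rw [hc (by omega)]; ring)
        | ring
  simp only [Matrix.mulVec, dotProduct]
  rw [Finset.sum_congr rfl (fun j _ => key j), Fin.sum_univ_eq_sum_range g M,
    hg,
    Finset.sum_add_distrib, Finset.sum_add_distrib,
    Finset.sum_ite_eq', Finset.sum_ite_eq', Finset.sum_ite_eq']
  have h1 : i.val ∈ Finset.range M := by simp [i.isLt]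
  have h2 : i.val - 1 ∈ Finset.range M := by simp [hsub]
  have hvi : extv M v i.val = v i := by simp [extv, i.isLt]
  rw [if_pos h1, if_pos h2, hvi]
  by_cases hp : (i.val + 1) % 2 = 0
  · have hi1 : 1 ≤ i.val := by omega
    by_cases hm : i.val + 1 < M
    · simp only [if_pos hp, if_pos hi1, Finset.mem_range, hm, if_true]
      split_ifs with h <;> first | (exact absurd ⟨hp, hi1⟩ h) | ring
    · have hz : extv M v (i.val + 1) = 0 := by simp [extv, hm]
      simp only [if_pos hp, if_pos hi1, Finset.mem_range, hm, if_false, hz]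
      split_ifs with h <;> first | (exact absurd ⟨hp, hi1⟩ h) | ring
  · simp [hp]

/-- Eigenvectors of the zig-zag Hamiltonian `H = Z(a,c)` (1-based labels):
(i) for every even `n` with `1 ≤ n ≤ M`, the standard basis vector `eₙ`
satisfies `H eₙ = aₙ eₙ`;
(ii) for every odd `n` with `1 ≤ n ≤ M-1`, provided `cₙ ≠ 0` and (when
`n ≥ 3`) `a_{n-1} ≠ aₙ`, the vector `ψ` with
`ψ_{n-1} = -(aₙ - a_{n+1}) c_{n-1} / ((a_{n-1} - aₙ) cₙ)` (entry present
only when `n ≥ 3`), `ψₙ = (aₙ - a_{n+1})/cₙ`, `ψ_{n+1} = 1` and all other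
entries zero satisfies `H ψ = aₙ ψ`. -/
theorem zigzag_eigenvectors (M : ℕ) (a c : ℕ → ℝ) :
    (∀ n : ℕ, n % 2 = 0 → 1 ≤ n → n ≤ M →
      (zigzag M a c).mulVec (fun i => if i.val + 1 = n then (1 : ℝ) else 0)
        = a n • fun i : Fin M => if i.val + 1 = n then (1 : ℝ) else 0) ∧
    (∀ n : ℕ, n % 2 = 1 → 1 ≤ n → n + 1 ≤ M → c n ≠ 0 →
      (3 ≤ n → a (n - 1) ≠ a n) →
      ∀ ψ : Fin M → ℝ,
        ψ = (fun i =>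
          if i.val + 2 = n then
            -((a n - a (n + 1)) * c (n - 1)) / ((a (n - 1) - a n) * c n)
          else if i.val + 1 = n then (a n - a (n + 1)) / c n
          else if i.val = n then 1
          else 0) →
        (zigzag M a c).mulVec ψ = a n • ψ) := by
  constructor
  · -- part (i)
    intro n hn h1 hnM
    funext i
    rw [zigzag_mulVec]
    simp only [Pi.smul_apply, smul_eq_mul]
    by_cases hd : i.val + 1 = n
    · have hp : (i.val + 1) % 2 = 0 := by omega
      have e1 : extv M (fun i : Fin M => if i.val + 1 = n then (1:ℝ) else 0) (i.val - 1) = 0 := by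
        simp only [extv]; split_ifs <;> first | rfl | omega
      have e2 : extv M (fun i : Fin M => if i.val + 1 = n then (1:ℝ) else 0) (i.val + 1) = 0 := by
        simp only [extv]; split_ifs <;> first | rfl | omega
      rw [if_pos hd, if_pos hp, e1, e2, hd]; ring
    · rw [if_neg hd]
      by_cases hp : (i.val + 1) % 2 = 0
      · have e1 : extv M (fun i : Fin M => if i.val + 1 = n then (1:ℝ) else 0) (i.val - 1) = 0 := by
          simp only [extv]; split_ifs <;> first | rfl | omega
        have e2 : extv M (fun i : Fin M => if i.val + 1 = n then (1:ℝ) else 0) (i.val + 1) = 0 := by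
          simp only [extv]; split_ifs <;> first | rfl | omega
        rw [if_pos hp, e1, e2]; ring
      · rw [if_neg hp]; ring
  · -- part (ii)
    intro n hn h1 hnM hc ha ψ hψ
    subst hψ
    funext i
    rw [zigzag_mulVec]
    simp only [Pi.smul_apply, smul_eq_mul]
    by_cases h2 : i.val + 2 = n
    · -- row n-2 (0-based), 1-based row n-1
      have hi1 : 1 ≤ i.val := by omega
      subst h2
      have hp : (i.val + 1) % 2 = 0 := by omega
      have hs1 : i.val + 2 - 1 = i.val + 1 := rfl
      have ha' : a (i.val + 1) - a (i.val + 2) ≠ 0 := by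
        have := ha (by omega)
        rw [hs1] at this
        exact sub_ne_zero.mpr this
      have e1 : extv M (fun j : Fin M =>
          if j.val + 2 = i.val + 2 then
            -((a (i.val + 2) - a (i.val + 2 + 1)) * c (i.val + 2 - 1)) / ((a (i.val + 2 - 1) - a (i.val + 2)) * c (i.val + 2))
          else if j.val + 1 = i.val + 2 then (a (i.val + 2) - a (i.val + 2 + 1)) / c (i.val + 2)
          else if j.val = i.val + 2 then 1
          else 0) (i.val - 1) = 0 := by
        simp only [extv]; split_ifs <;> first | rfl | omega
      have hlt : i.val + 1 < M := by omega
      have e2 : extv M (fun j : Fin M =>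
          if j.val + 2 = i.val + 2 then
            -((a (i.val + 2) - a (i.val + 2 + 1)) * c (i.val + 2 - 1)) / ((a (i.val + 2 - 1) - a (i.val + 2)) * c (i.val + 2))
          else if j.val + 1 = i.val + 2 then (a (i.val + 2) - a (i.val + 2 + 1)) / c (i.val + 2)
          else if j.val = i.val + 2 then 1
          else 0) (i.val + 1) = (a (i.val + 2) - a (i.val + 2 + 1)) / c (i.val + 2) := by
        simp only [extv, dif_pos hlt]; split_ifs <;> first | rfl | omega
      rw [e1, e2, if_pos hp]
      simp only [hs1]
      split_ifs <;> first | omega | (field_simp; try ring)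
    · by_cases hb : i.val + 1 = n
      · -- 1-based row n, odd
        subst hb
        have hp : ¬ (i.val + 1) % 2 = 0 := by omega
        rw [if_neg hp, add_zero]
      · by_cases hr : i.val = n
        · -- 1-based row n+1, even
          subst hr
          have hp : (i.val + 1) % 2 = 0 := by omega
          have hs1 : i.val - 1 + 1 = i.val := by omega
          have hlt1 : i.val - 1 < M := by omega
          have e1 : extv M (fun j : Fin M =>
              if j.val + 2 = i.val then
                -((a i.val - a (i.val + 1)) * c (i.val - 1)) / ((a (i.val - 1) - a i.val) * c i.val)
              else if j.val + 1 = i.val then (a i.val - a (i.val + 1)) / c i.val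
              else if j.val = i.val then 1
              else 0) (i.val - 1) = (a i.val - a (i.val + 1)) / c i.val := by
            simp only [extv, dif_pos hlt1]; split_ifs <;> first | rfl | omega
          have e2 : extv M (fun j : Fin M =>
              if j.val + 2 = i.val then
                -((a i.val - a (i.val + 1)) * c (i.val - 1)) / ((a (i.val - 1) - a i.val) * c i.val)
              else if j.val + 1 = i.val then (a i.val - a (i.val + 1)) / c i.val
              else if j.val = i.val then 1
              else 0) (i.val + 1) = 0 := by
            simp only [extv]; split_ifs <;> first | rfl | omega
          rw [e1, e2, if_pos hp]
          split_ifs <;> first | omega | (field_simp; try ring)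
        · -- all other rows: ψ vanishes on the window
          by_cases hp : (i.val + 1) % 2 = 0
          · have e1 : extv M (fun j : Fin M =>
                if j.val + 2 = n then
                  -((a n - a (n + 1)) * c (n - 1)) / ((a (n - 1) - a n) * c n)
                else if j.val + 1 = n then (a n - a (n + 1)) / c n
                else if j.val = n then 1
                else 0) (i.val - 1) = 0 := by
              simp only [extv]; split_ifs <;> first | rfl | omega
            have e2 : extv M (fun j : Fin M =>
                if j.val + 2 = n then
                  -((a n - a (n + 1)) * c (n - 1)) / ((a (n - 1) - a n) * c n)
                else if j.val + 1 = n then (a n - a (n + 1)) / c n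
                else if j.val = n then 1
                else 0) (i.val + 1) = 0 := by
              simp only [extv]; split_ifs <;> first | rfl | omega
            rw [e1, e2, if_pos hp]
            split_ifs <;> first | omega | ring
          · rw [if_neg hp, add_zero]
            split_ifs <;> first | omega | ring
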